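/- Let G be a Polish group acting continuously on a Polish space X with a G-invariant Borel probability measure μ, such that μ(A_g) > 0 for every g ≠ 1, where A_g = {x : g·x ≠ x}. Consider the diagonal action of G on X^ℕ with the product measure μ^ℕ. Then the complement of the free part, Z = {z ∈ X^ℕ : ∃ g ≠ 1, g·z = z}, has μ^ℕ-measure zero. -/

import Mathlib

open MeasureTheory Filter Topology
open scoped ENNReal

/-- Ulam tightness: a finite Borel measure on a complete separable metric space is tight. -/
lemma ulam_tight {X : Type*} [MetricSpace X] [CompleteSpace X]
    [TopologicalSpace.SeparableSpace X] [MeasurableSpace X] [OpensMeasurableSpace X]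
    (μ : Measure X) [IsFiniteMeasure μ] {ε : ENNReal} (hε : ε ≠ 0) :
    ∃ K : Set X, IsCompact K ∧ μ Kᶜ ≤ ε := by
  rcases isEmpty_or_nonempty X with hX | hX
  · refine ⟨∅, isCompact_empty, ?_⟩
    simp [Set.eq_empty_of_isEmpty]
  obtain ⟨u, hu⟩ := TopologicalSpace.exists_dense_seq X
  obtain ⟨δ, hδpos, hδsum⟩ := ENNReal.exists_pos_sum_of_countable hε ℕ
  set B : ℕ → ℕ → Set X := fun k m =>
    ⋃ i ∈ Finset.range (m + 1), Metric.closedBall (u i) (1 / (k + 1)) with hB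
  have hBclosed : ∀ k m, IsClosed (B k m) := fun k m =>
    Set.Finite.isClosed_biUnion (Finset.range (m + 1)).finite_toSet
      fun i _ => Metric.isClosed_closedBall
  have main : ∀ k : ℕ, ∃ m : ℕ, μ (B k m)ᶜ < δ k := by
    intro k
    have hmono : Monotone (B k) := fun a b hab =>
      Set.biUnion_subset_biUnion_left
        (Finset.coe_subset.2 (Finset.range_subset_range.2 (by omega)))
    have hanti : Antitone fun m => (B k m)ᶜ := fun a b hab =>
      Set.compl_subset_compl.2 (hmono hab)
    have hiInter : (⋂ m, (B k m)ᶜ) = ∅ := by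
      rw [Set.eq_empty_iff_forall_notMem]
      intro x hx
      have hpos : (0 : ℝ) < 1 / (k + 1) := by positivity
      obtain ⟨i, hy⟩ := hu.exists_mem_open (Metric.isOpen_ball (x := x) (ε := 1 / (k + 1)))
        (Metric.nonempty_ball.2 hpos)
      have hxB : x ∈ B k i := by
        apply Set.mem_biUnion (Finset.self_mem_range_succ i)
        exact Metric.ball_subset_closedBall (by rwa [Metric.mem_ball, dist_comm] at hy)
      exact (Set.mem_iInter.1 hx i) hxB
    have htend : Tendsto (fun m => μ (B k m)ᶜ) atTop (𝓝 0) := by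
      have := tendsto_measure_iInter_atTop
        (μ := μ) (s := fun m => (B k m)ᶜ)
        (fun m => ((hBclosed k m).isOpen_compl.measurableSet).nullMeasurableSet)
        hanti ⟨0, measure_ne_top μ _⟩
      rw [hiInter] at this
      simpa [Function.comp_def] using this
    have : ∀ᶠ m in atTop, μ (B k m)ᶜ < δ k :=
      htend.eventually (gt_mem_nhds (by exact_mod_cast hδpos k))
    exact this.exists
  choose m hm using main
  refine ⟨⋂ k, B k (m k), ?_, ?_⟩
  · refine TotallyBounded.isCompact_of_isClosed ?_ (isClosed_iInter fun k => hBclosed k (m k))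
    rw [Metric.totallyBounded_iff]
    intro r hr
    obtain ⟨k, hk⟩ := exists_nat_one_div_lt hr
    refine ⟨u '' ↑(Finset.range (m k + 1)), (Set.toFinite _).image u, ?_⟩
    intro x hx
    have hxB : x ∈ B k (m k) := Set.mem_iInter.1 hx k
    obtain ⟨i, hi, hxi⟩ := Set.mem_iUnion₂.1 hxB
    refine Set.mem_biUnion (Set.mem_image_of_mem u hi) ?_
    exact lt_of_le_of_lt (Metric.mem_closedBall.1 hxi) hk
  · rw [Set.compl_iInter]
    calc μ (⋃ k, (B k (m k))ᶜ) ≤ ∑' k, μ (B k (m k))ᶜ := measure_iUnion_le _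
      _ ≤ ∑' k, (δ k : ℝ≥0∞) := ENNReal.tsum_le_tsum fun k => (hm k).le
      _ ≤ ε := hδsum.le

/-- With `G`, `X`, `μ` as in Statement 0 (continuous action of a Polish
group on a Polish space, invariant Borel probability measure, `μ {x | g • x ≠ x} > 0`
for `g ≠ 1`), for the diagonal action of `G` on `X ^ ℕ` with the product measure `ν`
(characterized on cylinder sets), the complement of the free part
`Z = {z : ℕ → X | ∃ g ≠ 1, ∀ n, g • z n = z n}` is `ν`-null. -/
theorem stmt1 {G X : Type*} [Group G] [TopologicalSpace G] [IsTopologicalGroup G]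
    [PolishSpace G] [TopologicalSpace X] [PolishSpace X] [MulAction G X]
    [ContinuousSMul G X] [MeasurableSpace X] [BorelSpace X]
    (μ : Measure X) [IsProbabilityMeasure μ]
    (hinv : ∀ g : G, MeasurePreserving (fun x => g • x) μ μ)
    (hpos : ∀ g : G, g ≠ 1 → 0 < μ {x | g • x ≠ x})
    (ν : Measure (ℕ → X)) [IsProbabilityMeasure ν]
    (hν : ∀ (s : Finset ℕ) (A : ℕ → Set X), (∀ i, MeasurableSet (A i)) →
      ν {z : ℕ → X | ∀ i ∈ s, z i ∈ A i} = ∏ i ∈ s, μ (A i)) :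
    ν {z : ℕ → X | ∃ g : G, g ≠ 1 ∧ ∀ n : ℕ, g • z n = z n} = 0 := by
  classical
  -- the "moving" set in G × X is open
  have hW : IsOpen {p : G × X | p.1 • p.2 ≠ p.2} := by
    have hcont : Continuous fun p : G × X => (p.1 • p.2, p.2) :=
      (continuous_fst.smul continuous_snd).prodMk continuous_snd
    have hcl : IsClosed {p : G × X | p.1 • p.2 = p.2} := by
      have h := (isClosed_diagonal (X := X)).preimage hcont
      simpa [Set.preimage, Set.diagonal] using h
    have h2 := hcl.isOpen_compl
    simpa [Set.compl_setOf] using h2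
  -- tight compact subsets of positive measure inside each A_g, with uniform neighborhoods
  have key : ∀ g : G, g ≠ 1 → ∃ (U : Set G) (K : Set X), U ∈ 𝓝 g ∧ IsCompact K ∧
      0 < μ K ∧ ∀ h ∈ U, ∀ x ∈ K, h • x ≠ x := by
    intro g hg
    have hAopen : IsOpen {x : X | g • x ≠ x} := by
      have hc : Continuous fun x : X => ((g, x) : G × X) :=
        continuous_const.prodMk continuous_id
      simpa using hW.preimage hc
    have hApos := hpos g hg
    -- a closed subset of positive measure
    obtain ⟨C, hCsub, hCclosed, hClt⟩ :=
      hAopen.measurableSet.exists_isClosed_lt_add (μ := μ) (measure_ne_top μ _) hApos.ne'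
    have hCpos : 0 < μ C := by
      by_contra h
      push_neg at h
      have h0 : μ C = 0 := le_antisymm h zero_le
      simp [h0] at hClt
    -- a compact set of large measure, via Ulam tightness
    letI := TopologicalSpace.upgradeIsCompletelyMetrizable X
    obtain ⟨T, hTcomp, hTle⟩ := ulam_tight μ (ε := μ C / 2)
      (by simp [hCpos.ne', ENNReal.div_eq_zero_iff, measure_ne_top μ C])
    set K := C ∩ T with hK
    have hKcomp : IsCompact K := hTcomp.inter_left hCclosed
    have hKsub : K ⊆ {x : X | g • x ≠ x} := (Set.inter_subset_left).trans hCsub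
    have hKpos : 0 < μ K := by
      have hsplit : μ C ≤ μ K + μ C / 2 := by
        calc μ C ≤ μ (K ∪ (C \ K)) := measure_mono (by simp [hK])
          _ ≤ μ K + μ (C \ K) := measure_union_le _ _
          _ ≤ μ K + μ Tᶜ := by
              have hdiff : C \ K ⊆ Tᶜ := fun x hx hT => hx.2 ⟨hx.1, hT⟩
              exact add_le_add (le_refl _) (measure_mono hdiff)
          _ ≤ μ K + μ C / 2 := by gcongr
      by_contra h
      push_neg at h
      have h0 : μ K = 0 := le_antisymm h zero_le
      rw [h0, zero_add] at hsplit
      have : μ C = 0 := by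
        have := ENNReal.half_lt_self hCpos.ne' (measure_ne_top μ C)
        exact absurd (lt_of_le_of_lt hsplit this) (lt_irrefl _)
      exact hCpos.ne' this
    -- tube lemma
    have hprod : ({g} : Set G) ×ˢ K ⊆ {p : G × X | p.1 • p.2 ≠ p.2} := by
      rintro ⟨h, x⟩ ⟨hh, hx⟩
      simp only [Set.mem_singleton_iff] at hh
      subst hh
      exact hKsub hx
    obtain ⟨U, V, hUo, hVo, hgU, hKV, hUV⟩ :=
      generalized_tube_lemma isCompact_singleton hKcomp hW hprod
    exact ⟨U, K, hUo.mem_nhds (hgU rfl), hKcomp, hKpos,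
      fun h hh x hx => hUV (show (h, x) ∈ U ×ˢ V from ⟨hh, hKV hx⟩)⟩
  choose! U K hU hKcomp hKpos hmove using key
  -- countable cover of G \ {1}
  obtain ⟨t, hts, htc, htcover⟩ :=
    TopologicalSpace.countable_cover_nhdsWithin (s := {g : G | g ≠ 1}) (f := U)
      (fun g hg => mem_nhdsWithin_of_mem_nhds (hU g hg))
  -- the bad set is covered by countably many null sets
  have hsub : {z : ℕ → X | ∃ g : G, g ≠ 1 ∧ ∀ n : ℕ, g • z n = z n} ⊆
      ⋃ g ∈ t, {z : ℕ → X | ∀ n : ℕ, z n ∈ (K g)ᶜ} := by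
    rintro z ⟨h, hh1, hhfix⟩
    obtain ⟨g, hgt, hhU⟩ := Set.mem_iUnion₂.1 (htcover hh1)
    refine Set.mem_biUnion hgt fun n => ?_
    intro hzn
    exact hmove g (hts hgt) h hhU (z n) hzn (hhfix n)
  refine measure_mono_null hsub ((measure_biUnion_null_iff htc).2 fun g hgt => ?_)
  -- each such set is null: all coordinates avoid a fixed set of positive measure
  set c : ENNReal := μ (K g)ᶜ with hc
  have hKmeas : MeasurableSet (K g) := (hKcomp g (hts hgt)).isClosed.measurableSet
  have hclt : c < 1 := by
    rw [hc, prob_compl_eq_one_sub hKmeas]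
    exact ENNReal.sub_lt_self ENNReal.one_ne_top one_ne_zero (hKpos g (hts hgt)).ne'
  have hbound : ∀ mm : ℕ, ν {z : ℕ → X | ∀ n : ℕ, z n ∈ (K g)ᶜ} ≤ c ^ mm := by
    intro mm
    have := hν (Finset.range mm) (fun _ => (K g)ᶜ) (fun _ => hKmeas.compl)
    calc ν {z : ℕ → X | ∀ n : ℕ, z n ∈ (K g)ᶜ}
        ≤ ν {z : ℕ → X | ∀ i ∈ Finset.range mm, z i ∈ (K g)ᶜ} :=
          measure_mono fun z hz i _ => hz i
      _ = ∏ _i ∈ Finset.range mm, c := this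
      _ = c ^ mm := by rw [Finset.prod_const, Finset.card_range]
  have htend : Tendsto (fun mm : ℕ => c ^ mm) atTop (𝓝 0) :=
    ENNReal.tendsto_pow_atTop_nhds_zero_of_lt_one hclt
  exact le_antisymm (ge_of_tendsto' htend hbound) zero_le
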